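/- Let C be an abelian category, B a finite poset, and A ⊆ B a subposet. Let X : B → C be a functor and let β : Lan_i(X|_A) → X be the canonical morphism adjoint to the identity, where Lan_i denotes left Kan extension along the inclusion i : A ⊆ B. Then Hom(coker β, X) = 0 if, and only if, the restriction homomorphism End(X) → End(X|_A) is injective. -/

import Mathlib

open CategoryTheory CategoryTheory.Limits

universe v u

/-- The inclusion functor of a full subposet `A ⊆ B` into `B`. -/
def subposetIncl {B : Type} [PartialOrder B] (A : Set B) : A ⥤ B :=
  Monotone.functor (fun _ _ h => h : Monotone (Subtype.val : A → B))

/-- **Statement 19.** Let `C` be abelian, `B` a finite poset, `A ⊆ B` a subposet, and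
`X : B ⥤ C`.  Let `L` be a left Kan extension of the restriction `X|_A` along the inclusion
`i : A ⊆ B`, with unit `η`, and let `β : L ⟶ X` be the canonical morphism adjoint to the
identity of `X|_A`.  Then `Hom(coker β, X) = 0` if, and only if, the restriction homomorphism
`End(X) → End(X|_A)` is injective. -/
theorem hom_cokernel_eq_zero_iff_restriction_injective
    (C : Type u) [Category.{v} C] [Abelian C]
    {B : Type} [PartialOrder B] [Fintype B] (A : Set B)
    (X : B ⥤ C) (L : B ⥤ C)
    (η : (subposetIncl A ⋙ X) ⟶ subposetIncl A ⋙ L)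
    [L.IsLeftKanExtension η] :
    (∀ φ : cokernel (L.descOfIsLeftKanExtension η X (𝟙 (subposetIncl A ⋙ X))) ⟶ X,
        φ = 0) ↔
      Function.Injective
        (fun φ : X ⟶ X => Functor.whiskerLeft (subposetIncl A) φ) := by
  let i := subposetIncl A
  set β := L.descOfIsLeftKanExtension η X (𝟙 (i ⋙ X)) with hβ
  have hfac : η ≫ Functor.whiskerLeft i β = 𝟙 (i ⋙ X) :=
    L.descOfIsLeftKanExtension_fac η X (𝟙 (i ⋙ X))
  constructor
  · intro h φ ψ hw
    dsimp at hw
    have h1 : β ≫ (φ - ψ) = 0 := by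
      apply L.hom_ext_of_isLeftKanExtension η
      have : Functor.whiskerLeft i (β ≫ (φ - ψ)) = Functor.whiskerLeft i β ≫ Functor.whiskerLeft i (φ - ψ) := rfl
      rw [this, ← Category.assoc, hfac]
      ext a
      have h3 := NatTrans.congr_app hw a
      simp only [Functor.whiskerLeft_app] at h3
      simp [i, h3]
    have h2 : φ - ψ = cokernel.π β ≫ cokernel.desc β (φ - ψ) h1 := by
      rw [cokernel.π_desc]
    rw [h (cokernel.desc β (φ - ψ) h1), comp_zero] at h2
    exact sub_eq_zero.mp h2
  · intro h ψ
    set φ := cokernel.π β ≫ ψ with hφ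
    have hw : Functor.whiskerLeft i φ = Functor.whiskerLeft i (0 : X ⟶ X) := by
      have hβφ : Functor.whiskerLeft i (β ≫ φ) = Functor.whiskerLeft i (0 : L ⟶ X) := by
        rw [hφ, ← Category.assoc, cokernel.condition, zero_comp]
      calc Functor.whiskerLeft i φ = 𝟙 (i ⋙ X) ≫ Functor.whiskerLeft i φ := by rw [Category.id_comp]
        _ = η ≫ Functor.whiskerLeft i β ≫ Functor.whiskerLeft i φ := by rw [← hfac, Category.assoc]
        _ = η ≫ Functor.whiskerLeft i (β ≫ φ) := rfl
        _ = 0 := by rw [hβφ]; ext a; simp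
        _ = Functor.whiskerLeft i (0 : X ⟶ X) := by ext a; simp
    have hφ0 : φ = 0 := h hw
    have : cokernel.π β ≫ ψ = cokernel.π β ≫ 0 := by rw [← hφ, hφ0, comp_zero]
    exact (cancel_epi (cokernel.π β)).mp this
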